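/- Fix α ∈ (1,2). Let Y₀ : [0,∞) × Ω → ℝ be a jointly measurable stochastic process such that Y₀(0) = 0 almost surely, almost every sample path t ↦ Y₀(t) is càdlàg, Y₀ has independent increments (for any 0 ≤ t₀ < t₁ < … < t_n the increments Y₀(t₁) − Y₀(t₀), …, Y₀(t_n) − Y₀(t_{n−1}) are independent), and for all 0 ≤ s ≤ t and all λ ≥ 0, E[exp(−λ(Y₀(t) − Y₀(s)))] = exp((t−s) λ^{α}). Set X = ∫₀¹ Y₀(s) ds. Then for every λ ≥ 0, E[exp(−λ X)] = exp(λ^{α}/(α+1)). -/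

import Mathlib

open MeasureTheory ProbabilityTheory Filter Set Topology

/-- A function on `[0,∞)` is càdlàg: right-continuous at every `t ≥ 0`, with left
limits at every `t > 0`. -/
def CadlagOn (f : ℝ → ℝ) : Prop :=
  (∀ t : ℝ, 0 ≤ t → Filter.Tendsto f (𝓝[Set.Ici t] t) (𝓝 (f t))) ∧
  (∀ t : ℝ, 0 < t → ∃ l : ℝ, Filter.Tendsto f (𝓝[Set.Ico 0 t] t) (𝓝 l))

set_option maxHeartbeats 1000000 in
lemma my_abel (g : ℕ → ℝ) (n : ℕ) : ∀ m : ℕ,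
    ∑ i ∈ Finset.range m, ((n:ℝ) - i) * (g (i+1) - g i)
      = ((n:ℝ) - m) * g m - n * g 0 + ∑ i ∈ Finset.range m, g (i+1) := by
  intro m
  induction m with
  | zero => simp
  | succ m ih =>
    rw [Finset.sum_range_succ, ih, Finset.sum_range_succ]
    push_cast
    ring

set_option maxHeartbeats 1000000 in
lemma cadlag_bdd (f : ℝ → ℝ) (hf : CadlagOn f) : ∃ M : ℝ, ∀ t ∈ Set.Icc (0:ℝ) 1, |f t| ≤ M := by
  have key : ∀ t : ℝ, t ∈ Set.Icc (0:ℝ) 1 →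
      ∃ (U : Set ℝ) (B : ℝ), U ∈ 𝓝 t ∧ ∀ u ∈ U ∩ Set.Icc (0:ℝ) 1, |f u| ≤ B := by
    intro t ht
    have h1 : ∀ᶠ u in 𝓝[Set.Ici t] t, dist (f u) (f t) < 1 :=
      (Metric.tendsto_nhds.mp (hf.1 t ht.1)) 1 one_pos
    rw [eventually_nhdsWithin_iff] at h1
    rcases eq_or_lt_of_le ht.1 with h0 | h0
    · -- t = 0
      obtain ⟨V, hV, hVt⟩ := h1.exists_mem
      refine ⟨V, |f t| + 1, hV, fun u hu => ?_⟩
      have : dist (f u) (f t) < 1 := hVt u hu.1 (h0 ▸ hu.2.1)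
      calc |f u| ≤ |f t| + dist (f u) (f t) := by
            rw [Real.dist_eq]; have := abs_sub_abs_le_abs_sub (f u) (f t); linarith
        _ ≤ |f t| + 1 := by linarith
    · obtain ⟨l, hl⟩ := hf.2 t h0
      have h2 : ∀ᶠ u in 𝓝[Set.Ico 0 t] t, dist (f u) l < 1 :=
        (Metric.tendsto_nhds.mp hl) 1 one_pos
      rw [eventually_nhdsWithin_iff] at h2
      obtain ⟨V, hV, hVt⟩ := (h1.and h2).exists_mem
      refine ⟨V, max (|f t| + 1) (|l| + 1), hV, fun u hu => ?_⟩
      rcases le_or_gt t u with hc | hc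
      · have : dist (f u) (f t) < 1 := (hVt u hu.1).1 hc
        have h3 : |f u| ≤ |f t| + 1 := by
          rw [Real.dist_eq] at this
          have := abs_sub_abs_le_abs_sub (f u) (f t); linarith
        exact h3.trans (le_max_left _ _)
      · have : dist (f u) l < 1 := (hVt u hu.1).2 ⟨hu.2.1, hc⟩
        have h3 : |f u| ≤ |l| + 1 := by
          rw [Real.dist_eq] at this
          have := abs_sub_abs_le_abs_sub (f u) l; linarith
        exact h3.trans (le_max_right _ _)
  choose! U B hU hB using key
  obtain ⟨F, hF, hcov⟩ := isCompact_Icc.elim_nhds_subcover U (fun x hx => hU x hx)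
  obtain ⟨M, hM⟩ := (F.image B).exists_le
  refine ⟨M, fun t ht => ?_⟩
  obtain ⟨x, hx, hxt⟩ := Set.mem_iUnion₂.mp (hcov ht)
  exact (hB x (hF x hx) t ⟨hxt, ht⟩).trans (hM _ (Finset.mem_image_of_mem B hx))

set_option maxHeartbeats 1000000 in
lemma step_integral_eq (f : ℝ → ℝ) (n : ℕ) (hn : 1 ≤ n) :
    ∫ s in (0:ℝ)..1, f ((⌈(n:ℝ) * s⌉₊ : ℝ)/n)
      = (1/(n:ℝ)) * ∑ k ∈ Finset.range n, f (((k:ℝ)+1)/n) := by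
  have hn0 : (n:ℝ) ≠ 0 := Nat.cast_ne_zero.mpr (by omega)
  have hnpos : (0:ℝ) < n := by positivity
  set g : ℝ → ℝ := fun s => f ((⌈(n:ℝ) * s⌉₊ : ℝ)/n) with hg
  -- on each subinterval Ioc (k/n) ((k+1)/n), g = f ((k+1)/n)
  have hEq : ∀ k : ℕ, Set.EqOn g (fun _ => f (((k:ℝ)+1)/n))
      (Set.Ioc ((k:ℝ)/n) (((k:ℝ)+1)/n)) := by
    intro k s hs
    have h1 : (k:ℝ) < (n:ℝ) * s := by
      have := hs.1
      rw [div_lt_iff₀ hnpos] at this; linarith [this]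
    have h2 : (n:ℝ) * s ≤ (k:ℝ) + 1 := by
      have := hs.2
      rw [le_div_iff₀ hnpos] at this; linarith [this]
    have hceil : ⌈(n:ℝ) * s⌉₊ = k + 1 := by
      rw [Nat.ceil_eq_iff (by omega)]
      constructor
      · simpa using h1
      · push_cast; linarith
    simp only [hg, hceil]
    push_cast
    ring_nf
  have hInt : ∀ k : ℕ, IntervalIntegrable g volume ((k:ℝ)/n) (((k:ℝ)+1)/n) := by
    intro k
    have hle : (k:ℝ)/n ≤ ((k:ℝ)+1)/n := by
      gcongr; linarith
    rw [intervalIntegrable_iff_integrableOn_Ioc_of_le hle]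
    exact (integrableOn_const measure_Ioc_lt_top.ne).congr_fun
      (fun s hs => (hEq k hs).symm) measurableSet_Ioc
  have hval : ∀ k : ℕ, ∫ s in ((k:ℝ)/n)..(((k:ℝ)+1)/n), g s = (1/(n:ℝ)) * f (((k:ℝ)+1)/n) := by
    intro k
    have hle : (k:ℝ)/n ≤ ((k:ℝ)+1)/n := by
      gcongr; linarith
    rw [intervalIntegral.integral_of_le hle,
      setIntegral_congr_fun measurableSet_Ioc (hEq k), setIntegral_const,
      Real.volume_real_Ioc_of_le hle]
    have hd : ((k:ℝ)+1)/n - (k:ℝ)/n = 1/n := by field_simp; ring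
    rw [hd, smul_eq_mul]
  have adj := intervalIntegral.sum_integral_adjacent_intervals
    (a := fun k : ℕ => (k:ℝ)/n) (μ := volume) (f := g)
    (fun k (_ : k < n) => by push_cast; exact hInt k)
  push_cast at adj
  rw [zero_div, div_self hn0] at adj
  rw [← adj, Finset.mul_sum]
  refine Finset.sum_congr rfl fun k _ => ?_
  exact hval k

set_option maxHeartbeats 1000000 in
lemma riemann_tendsto (f : ℝ → ℝ) (hf : Measurable f) (M : ℝ)
    (hM : ∀ t ∈ Set.Icc (0:ℝ) 1, |f t| ≤ M)
    (hrc : ∀ t ∈ Set.Ioc (0:ℝ) 1, Filter.Tendsto f (𝓝[Set.Ici t] t) (𝓝 (f t))) :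
    Filter.Tendsto (fun n : ℕ => (1/(n:ℝ)) * ∑ k ∈ Finset.range n, f (((k:ℝ)+1)/n))
      Filter.atTop (𝓝 (∫ s in (0:ℝ)..1, f s)) := by
  set g : ℕ → ℝ → ℝ := fun n s => f ((⌈(n:ℝ) * s⌉₊ : ℝ)/n) with hg
  have hmem : ∀ (n : ℕ) (s : ℝ), s ∈ Set.Ioc (0:ℝ) 1 → (⌈(n:ℝ) * s⌉₊ : ℝ)/n ∈ Set.Icc (0:ℝ) 1 := by
    intro n s hs
    rcases Nat.eq_zero_or_pos n with h0 | h0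
    · subst h0; simp
    · have hnpos : (0:ℝ) < n := by positivity
      constructor
      · positivity
      · rw [div_le_one hnpos]
        have : ⌈(n:ℝ) * s⌉₊ ≤ n := by
          rw [Nat.ceil_le]
          calc (n:ℝ) * s ≤ (n:ℝ) * 1 := by
                have := hs.2; nlinarith
            _ = n := mul_one _
        exact_mod_cast this
  have key : Filter.Tendsto (fun n : ℕ => ∫ s in Set.Ioc (0:ℝ) 1, g n s)
      Filter.atTop (𝓝 (∫ s in Set.Ioc (0:ℝ) 1, f s)) := by
    apply MeasureTheory.tendsto_integral_of_dominated_convergence (bound := fun _ => M)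
    · intro n
      have hmg : Measurable (g n) := by
        apply hf.comp
        exact measurable_from_top.comp (Nat.measurable_ceil.comp (measurable_const_mul _))
          |>.div_const _
      exact hmg.aestronglyMeasurable
    · exact integrableOn_const measure_Ioc_lt_top.ne
    · intro n
      rw [ae_restrict_iff' measurableSet_Ioc]
      filter_upwards with s hs
      rw [Real.norm_eq_abs]
      exact hM _ (hmem n s hs)
    · rw [ae_restrict_iff' measurableSet_Ioc]
      filter_upwards with s hs
      have hnpos : ∀ n : ℕ, 1 ≤ n → ((0:ℝ) < n) := by
        intro n hn; exact_mod_cast Nat.pos_of_ne_zero (by omega)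
      have hub : ∀ᶠ n : ℕ in Filter.atTop,
          s ≤ (⌈(n:ℝ) * s⌉₊ : ℝ)/n ∧ (⌈(n:ℝ) * s⌉₊ : ℝ)/n ≤ s + 1/n := by
        filter_upwards [Filter.eventually_ge_atTop 1] with n hn
        have hp := hnpos n hn
        constructor
        · rw [le_div_iff₀ hp, mul_comm]
          exact Nat.le_ceil _
        · rw [div_le_iff₀ hp]
          have h1 : ((⌈(n:ℝ) * s⌉₊ : ℝ)) < (n:ℝ) * s + 1 :=
            Nat.ceil_lt_add_one (mul_nonneg (by positivity) hs.1.le)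
          have : (s + 1/n) * n = n * s + 1 := by field_simp
          rw [this]
          linarith
      have hu : Filter.Tendsto (fun n : ℕ => (⌈(n:ℝ) * s⌉₊ : ℝ)/n) Filter.atTop (𝓝 s) := by
        have h2 : Filter.Tendsto (fun n : ℕ => s + 1/n) Filter.atTop (𝓝 s) := by
          simpa using (tendsto_const_nhds (x := s)).add tendsto_one_div_atTop_nhds_zero_nat
        exact tendsto_of_tendsto_of_tendsto_of_le_of_le' tendsto_const_nhds h2
          (hub.mono fun n h => h.1) (hub.mono fun n h => h.2)
      have hu' : Filter.Tendsto (fun n : ℕ => (⌈(n:ℝ) * s⌉₊ : ℝ)/n) Filter.atTop (𝓝[Set.Ici s] s) := by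
        rw [tendsto_nhdsWithin_iff]
        exact ⟨hu, hub.mono fun n h => h.1⟩
      exact (hrc s hs).comp hu'
  rw [intervalIntegral.integral_of_le zero_le_one]
  apply key.congr'
  filter_upwards [Filter.eventually_ge_atTop 1] with n hn
  rw [← intervalIntegral.integral_of_le zero_le_one]
  exact step_integral_eq f n hn

set_option maxHeartbeats 1000000 in
lemma integrable_of_integral_ne_zero {Ω : Type*} [MeasureSpace Ω] {f : Ω → ℝ}
    (h : ∫ ω, f ω ∂ℙ ≠ 0) : Integrable f ℙ := by
  by_contra hc; exact h (integral_undef hc)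

set_option maxHeartbeats 1000000 in
lemma moment_eq {Ω : Type*} [MeasureSpace Ω] [IsProbabilityMeasure (ℙ : Measure Ω)]
    (α : ℝ) (hα : α ∈ Set.Ioo (1:ℝ) 2)
    (Y₀ : ℝ → Ω → ℝ)
    (hmeas : Measurable (Function.uncurry Y₀))
    (hindep : ∀ n : ℕ, ∀ t : Fin (n+1) → ℝ, (∀ i, 0 ≤ t i) → Monotone t →
      iIndepFun (m := fun _ : Fin n => (inferInstance : MeasurableSpace ℝ))
        (fun (i : Fin n) (ω : Ω) => Y₀ (t i.succ) ω - Y₀ (t i.castSucc) ω) ℙ)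
    (hlaplace : ∀ s t l : ℝ, 0 ≤ s → s ≤ t → 0 ≤ l →
      ∫ ω, Real.exp (-l * (Y₀ t ω - Y₀ s ω)) ∂ℙ = Real.exp ((t - s) * l ^ α))
    (l : ℝ) (hl : 0 ≤ l) (n : ℕ) :
    ∫ ω, Real.exp (-l * ∑ i ∈ Finset.range n,
        (((n:ℝ) - i)/n) * (Y₀ (((i:ℝ)+1)/n) ω - Y₀ ((i:ℝ)/n) ω)) ∂ℙ
      = Real.exp (l ^ α * ((1/(n:ℝ)) * ∑ k ∈ Finset.range n, (((k:ℝ)+1)/n) ^ α)) := by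
  rcases Nat.eq_zero_or_pos n with rfl | hn
  · simp
  have hn0 : (n:ℝ) ≠ 0 := Nat.cast_ne_zero.mpr (by omega)
  have hnpos : (0:ℝ) < n := by positivity
  have hYt : ∀ t : ℝ, Measurable (Y₀ t) := fun t => hmeas.comp measurable_prodMk_left
  -- the increments
  set D : Fin n → Ω → ℝ := fun i ω => Y₀ (((i.1:ℝ)+1)/n) ω - Y₀ ((i.1:ℝ)/n) ω with hD
  have hD_indep : iIndepFun (m := fun _ : Fin n => (inferInstance : MeasurableSpace ℝ)) D ℙ := by
    have h := hindep n (fun i : Fin (n+1) => (i.1:ℝ)/n)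
      (fun i => by positivity)
      (fun i j hij => by
        refine (div_le_div_iff_of_pos_right hnpos).mpr ?_
        exact_mod_cast hij)
    convert h using 2 with i ω
    simp only [hD, Fin.val_succ, Fin.coe_castSucc]
    push_cast
    ring_nf
  set X : Fin n → Ω → ℝ := fun i => (fun x => (((n:ℝ) - i.1)/n) * x) ∘ D i with hX
  have hX_indep : iIndepFun (m := fun _ : Fin n => (inferInstance : MeasurableSpace ℝ)) X ℙ :=
    hD_indep.comp _ (fun i => measurable_const_mul _)
  have hX_meas : ∀ i, Measurable (X i) :=
    fun i => (measurable_const_mul _).comp (((hYt _).sub (hYt _)))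
  have hmgf := hX_indep.mgf_sum hX_meas Finset.univ (t := -l)
  have hci : ∀ i : Fin n, 0 ≤ ((n:ℝ) - i.1)/n := by
    intro i
    have : (i.1:ℝ) ≤ n := by exact_mod_cast (i.isLt.le)
    exact div_nonneg (by linarith) hnpos.le
  -- each factor
  have hfac : ∀ i : Fin n, mgf (X i) ℙ (-l)
      = Real.exp ((1/(n:ℝ)) * (l ^ α * (((n:ℝ) - i.1)/n) ^ α)) := by
    intro i
    have hc := hci i
    have heq : (fun ω => Real.exp (-l * X i ω))
        = fun ω => Real.exp (-(l * (((n:ℝ) - i.1)/n)) *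
            (Y₀ (((i.1:ℝ)+1)/n) ω - Y₀ ((i.1:ℝ)/n) ω)) := by
      funext ω; simp only [hX, hD, Function.comp_apply]; ring_nf
    have hab : ((i.1:ℝ))/n ≤ ((i.1:ℝ)+1)/n := by gcongr; linarith
    have := hlaplace ((i.1:ℝ)/n) (((i.1:ℝ)+1)/n) (l * (((n:ℝ) - i.1)/n))
      (by positivity) hab (mul_nonneg hl hc)
    rw [mgf, heq, this]
    congr 1
    have hsub : ((i.1:ℝ)+1)/n - (i.1:ℝ)/n = 1/n := by field_simp; ring
    rw [hsub, Real.mul_rpow hl hc]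
  have hprod : ∏ i : Fin n, mgf (X i) ℙ (-l)
      = Real.exp (∑ i : Fin n, (1/(n:ℝ)) * (l ^ α * (((n:ℝ) - i.1)/n) ^ α)) := by
    rw [Real.exp_sum]
    exact Finset.prod_congr rfl fun i _ => hfac i
  have hsum : ∀ ω : Ω, (∑ i : Fin n, X i) ω = ∑ i ∈ Finset.range n,
      (((n:ℝ) - i)/n) * (Y₀ (((i:ℝ)+1)/n) ω - Y₀ ((i:ℝ)/n) ω) := by
    intro ω
    rw [Finset.sum_apply]
    exact Fin.sum_univ_eq_sum_range
      (fun k => (((n:ℝ) - k)/n) * (Y₀ (((k:ℝ)+1)/n) ω - Y₀ ((k:ℝ)/n) ω)) n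
  have hL : ∫ ω, Real.exp (-l * ∑ i ∈ Finset.range n,
      (((n:ℝ) - i)/n) * (Y₀ (((i:ℝ)+1)/n) ω - Y₀ ((i:ℝ)/n) ω)) ∂ℙ
      = mgf (∑ i : Fin n, X i) ℙ (-l) := by
    rw [mgf]
    refine integral_congr_ae (Filter.Eventually.of_forall fun ω => ?_)
    simp only [hsum]
  rw [hL, hmgf, hprod]
  have hre : ∑ i : Fin n, (1/(n:ℝ)) * (l ^ α * (((n:ℝ) - i.1)/n) ^ α)
      = ∑ k ∈ Finset.range n, (1/(n:ℝ)) * (l ^ α * ((((k:ℝ)+1))/n) ^ α) := by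
    rw [Fin.sum_univ_eq_sum_range (fun k => (1/(n:ℝ)) * (l ^ α * (((n:ℝ) - k)/n) ^ α)) n,
      ← Finset.sum_range_reflect (fun k => (1/(n:ℝ)) * (l ^ α * ((((k:ℝ)+1))/n) ^ α)) n]
    refine Finset.sum_congr rfl fun i hi => ?_
    have hi' := Finset.mem_range.mp hi
    have hc2 : (((n - 1 - i : ℕ):ℝ)+1) = (n:ℝ) - i := by
      rw [show n - 1 - i = n - (1+i) by omega, Nat.cast_sub (by omega)]
      push_cast; ring
    rw [hc2]
  rw [hre]
  congr 1
  rw [Finset.mul_sum, Finset.mul_sum]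
  exact Finset.sum_congr rfl fun k _ => by ring

set_option maxHeartbeats 1000000 in
/-- If `Y₀` is a spectrally positive `α`-stable Lévy process started
from `0`, with `E[exp(-λ(Y₀ t - Y₀ s))] = exp((t-s) λ^α)`, then
`X = ∫₀¹ Y₀(s) ds` satisfies `E[exp(-λ X)] = exp(λ^α / (α+1))`. -/
theorem laplace_integral_stable_process
    {Ω : Type*} [MeasureSpace Ω] [IsProbabilityMeasure (ℙ : Measure Ω)]
    (α : ℝ) (hα : α ∈ Set.Ioo (1:ℝ) 2)
    (Y₀ : ℝ → Ω → ℝ)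
    (hmeas : Measurable (Function.uncurry Y₀))
    (hzero : ∀ᵐ ω ∂ℙ, Y₀ 0 ω = 0)
    (hpath : ∀ᵐ ω ∂ℙ, CadlagOn (fun t => Y₀ t ω))
    (hindep : ∀ n : ℕ, ∀ t : Fin (n+1) → ℝ, (∀ i, 0 ≤ t i) → Monotone t →
      iIndepFun (m := fun _ : Fin n => (inferInstance : MeasurableSpace ℝ))
        (fun (i : Fin n) (ω : Ω) => Y₀ (t i.succ) ω - Y₀ (t i.castSucc) ω) ℙ)
    (hlaplace : ∀ s t l : ℝ, 0 ≤ s → s ≤ t → 0 ≤ l →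
      ∫ ω, Real.exp (-l * (Y₀ t ω - Y₀ s ω)) ∂ℙ = Real.exp ((t - s) * l ^ α)) :
    ∀ l : ℝ, 0 ≤ l →
      ∫ ω, Real.exp (-l * ∫ s in (0:ℝ)..1, Y₀ s ω) ∂ℙ =
        Real.exp (l ^ α / (α + 1)) := by
  intro l hl
  obtain ⟨hα1, hα2⟩ := hα
  have hα0 : (0:ℝ) ≤ α := by linarith
  have hYt : ∀ t : ℝ, Measurable (Y₀ t) := fun t => hmeas.comp measurable_prodMk_left
  set T : ℕ → Ω → ℝ := fun n ω => ∑ i ∈ Finset.range n,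
      (((n:ℝ) - i)/n) * (Y₀ (((i:ℝ)+1)/n) ω - Y₀ ((i:ℝ)/n) ω) with hT
  set A : ℕ → ℝ := fun n => (1/(n:ℝ)) * ∑ k ∈ Finset.range n, (((k:ℝ)+1)/n) ^ α with hA
  set W : Ω → ℝ := fun ω => ∫ s in (0:ℝ)..1, Y₀ s ω with hW
  have hT_meas : ∀ n, Measurable (T n) := by
    intro n
    exact Finset.measurable_sum _ fun i _ =>
      ((hYt _).sub (hYt _)).const_mul _
  have hmom : ∀ l' : ℝ, 0 ≤ l' → ∀ n : ℕ,
      ∫ ω, Real.exp (-l' * T n ω) ∂ℙ = Real.exp (l' ^ α * A n) :=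
    fun l' hl' n => moment_eq α ⟨hα1, hα2⟩ Y₀ hmeas hindep hlaplace l' hl' n
  have hA1 : ∀ n, A n ≤ 1 := by
    intro n
    rcases Nat.eq_zero_or_pos n with rfl | hn
    · simp [hA]
    have hnpos : (0:ℝ) < n := by positivity
    have : ∑ k ∈ Finset.range n, (((k:ℝ)+1)/n) ^ α ≤ n := by
      calc ∑ k ∈ Finset.range n, (((k:ℝ)+1)/n) ^ α
          ≤ ∑ _k ∈ Finset.range n, (1:ℝ) := by
            refine Finset.sum_le_sum fun k hk => ?_
            have hk' := Finset.mem_range.mp hk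
            refine Real.rpow_le_one (by positivity) ?_ hα0
            rw [div_le_one hnpos]
            have : (k:ℝ) + 1 ≤ n := by exact_mod_cast hk'
            linarith
        _ = n := by simp
    rw [hA]
    calc (1/(n:ℝ)) * ∑ k ∈ Finset.range n, (((k:ℝ)+1)/n) ^ α
        ≤ (1/(n:ℝ)) * n := by
          exact mul_le_mul_of_nonneg_left this (by positivity)
      _ = 1 := by field_simp
  -- measurability of W
  have hW_meas : Measurable W := by
    have h1 : StronglyMeasurable fun ω => ∫ s, Y₀ s ω ∂(volume.restrict (Set.Ioc (0:ℝ) 1)) :=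
      MeasureTheory.StronglyMeasurable.integral_prod_left hmeas.stronglyMeasurable
    have h2 : W = fun ω => ∫ s, Y₀ s ω ∂(volume.restrict (Set.Ioc (0:ℝ) 1)) := by
      funext ω; rw [hW]; exact intervalIntegral.integral_of_le zero_le_one
    rw [h2]; exact h1.measurable
  -- a.e. convergence of T n to W
  have hae : ∀ᵐ ω ∂ℙ, Filter.Tendsto (fun n => T n ω) Filter.atTop (𝓝 (W ω)) := by
    filter_upwards [hzero, hpath] with ω h0 hc
    set f : ℝ → ℝ := fun t => Y₀ t ω with hf
    have hfm : Measurable f := hmeas.comp measurable_prodMk_right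
    obtain ⟨M, hM⟩ := cadlag_bdd f hc
    have h1 := riemann_tendsto f hfm M hM (fun t ht => hc.1 t ht.1.le)
    have hTn : ∀ n : ℕ, T n ω = (1/(n:ℝ)) * ∑ k ∈ Finset.range n, f (((k:ℝ)+1)/n) := by
      intro n
      set g : ℕ → ℝ := fun k => f ((k:ℝ)/n) with hg
      have e1 : T n ω = (1/(n:ℝ)) * ∑ i ∈ Finset.range n, ((n:ℝ) - i) * (g (i+1) - g i) := by
        rw [hT, Finset.mul_sum]
        refine Finset.sum_congr rfl fun i _ => ?_
        have : g (i+1) = f (((i:ℝ)+1)/n) := by rw [hg]; push_cast; ring_nf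
        rw [this, hg]
        ring
      have e2 : g 0 = 0 := by
        rw [hg]
        simpa using h0
      rw [e1, my_abel g n n, e2]
      have e3 : ∀ i : ℕ, g (i+1) = f (((i:ℝ)+1)/n) := by
        intro i; rw [hg]; push_cast; ring_nf
      rw [Finset.sum_congr rfl fun i _ => e3 i]
      ring
    exact (h1.congr (fun n => (hTn n).symm))
  -- second moment bound
  set K : ℝ := Real.exp ((2*l) ^ α) with hK
  have hKpos : 0 < K := Real.exp_pos _
  have h2l : (0:ℝ) ≤ 2 * l := by linarith
  have hA0 : ∀ n, 0 ≤ A n := by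
    intro n
    rw [hA]
    refine mul_nonneg (by positivity) (Finset.sum_nonneg fun k _ => Real.rpow_nonneg (by positivity) _)
  have hF2le : ∀ n, ∫ ω, Real.exp (-(2*l) * T n ω) ∂ℙ ≤ K := by
    intro n
    rw [hmom (2*l) h2l n, hK]
    exact Real.exp_le_exp.mpr (mul_le_of_le_one_right (Real.rpow_nonneg h2l _) (hA1 n))
  have hFn_int : ∀ n, Integrable (fun ω => Real.exp (-l * T n ω)) ℙ := by
    intro n
    exact integrable_of_integral_ne_zero (by rw [hmom l hl n]; exact (Real.exp_pos _).ne')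
  have hFn2_int : ∀ n, Integrable (fun ω => Real.exp (-(2*l) * T n ω)) ℙ := by
    intro n
    exact integrable_of_integral_ne_zero (by rw [hmom (2*l) h2l n]; exact (Real.exp_pos _).ne')
  set Fl : Ω → ℝ := fun ω => Real.exp (-l * W ω) with hFl
  have hFl_meas : Measurable Fl := ((hW_meas.const_mul (-l)).exp)
  have hFl2_meas : Measurable (fun ω => Real.exp (-(2*l) * W ω)) :=
    ((hW_meas.const_mul (-(2*l))).exp)
  -- Fatou: second moment of the limit
  have hFl2_lint : ∫⁻ ω, ENNReal.ofReal (Real.exp (-(2*l) * W ω)) ∂ℙ ≤ ENNReal.ofReal K := by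
    set g : ℕ → Ω → ENNReal := fun n ω => ENNReal.ofReal (Real.exp (-(2*l) * T n ω)) with hg
    have hgm : ∀ n, Measurable (g n) := fun n =>
      (measurable_coe_nnreal_ennreal.comp (((hT_meas n).const_mul (-(2*l))).exp.real_toNNReal))
    have hlim : ∀ᵐ ω ∂ℙ, ENNReal.ofReal (Real.exp (-(2*l) * W ω))
        = Filter.liminf (fun n => g n ω) Filter.atTop := by
      filter_upwards [hae] with ω hω
      have h1 : Filter.Tendsto (fun n => g n ω) Filter.atTop
          (𝓝 (ENNReal.ofReal (Real.exp (-(2*l) * W ω)))) := by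
        apply (ENNReal.continuous_ofReal.tendsto _).comp
        apply (Real.continuous_exp.tendsto _).comp
        exact hω.const_mul (-(2*l))
      exact h1.liminf_eq.symm
    calc ∫⁻ ω, ENNReal.ofReal (Real.exp (-(2*l) * W ω)) ∂ℙ
        = ∫⁻ ω, Filter.liminf (fun n => g n ω) Filter.atTop ∂ℙ := lintegral_congr_ae hlim
      _ ≤ Filter.liminf (fun n => ∫⁻ ω, g n ω ∂ℙ) Filter.atTop := lintegral_liminf_le hgm
      _ ≤ ENNReal.ofReal K := by
          have hle : ∀ n, ∫⁻ ω, g n ω ∂ℙ ≤ ENNReal.ofReal K := by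
            intro n
            rw [hg]
            rw [← MeasureTheory.ofReal_integral_eq_lintegral_ofReal (hFn2_int n)
              (Filter.Eventually.of_forall fun ω => (Real.exp_pos _).le)]
            exact ENNReal.ofReal_le_ofReal (hF2le n)
          calc Filter.liminf (fun n => ∫⁻ ω, g n ω ∂ℙ) Filter.atTop
              ≤ Filter.liminf (fun _ : ℕ => ENNReal.ofReal K) Filter.atTop :=
                Filter.liminf_le_liminf (Filter.Eventually.of_forall hle)
            _ = ENNReal.ofReal K := Filter.liminf_const _
  have hFl2_int : Integrable (fun ω => Real.exp (-(2*l) * W ω)) ℙ := by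
    refine ⟨hFl2_meas.aestronglyMeasurable, ?_⟩
    rw [hasFiniteIntegral_iff_ofReal (Filter.Eventually.of_forall fun ω => (Real.exp_pos _).le)]
    exact lt_of_le_of_lt hFl2_lint ENNReal.ofReal_lt_top
  have hFl2_le : ∫ ω, Real.exp (-(2*l) * W ω) ∂ℙ ≤ K := by
    rw [MeasureTheory.integral_eq_lintegral_of_nonneg_ae
      (Filter.Eventually.of_forall fun ω => (Real.exp_pos _).le) hFl2_meas.aestronglyMeasurable]
    exact ENNReal.toReal_le_of_le_ofReal hKpos.le hFl2_lint
  have hFl_int : Integrable Fl ℙ := by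
    refine Integrable.mono ((integrable_const (1:ℝ)).add hFl2_int) hFl_meas.aestronglyMeasurable
      (Filter.Eventually.of_forall fun ω => ?_)
    have hx : (0:ℝ) < Real.exp (-l * W ω) := Real.exp_pos _
    have hsq : Real.exp (-l * W ω) * Real.exp (-l * W ω) = Real.exp (-(2*l) * W ω) := by
      rw [← Real.exp_add]; congr 1; ring
    rw [Real.norm_eq_abs, Real.norm_eq_abs, abs_of_pos hx, abs_of_pos]
    · simp only [Pi.add_apply]
      nlinarith [Real.exp_pos (-(2*l) * W ω), sq_nonneg (Real.exp (-l * W ω) - 1)]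
    · simp only [Pi.add_apply]
      nlinarith [Real.exp_pos (-(2*l) * W ω)]
  -- squared difference integrability and bound
  have hsq_int : ∀ n, Integrable (fun ω => (Real.exp (-l * T n ω) - Fl ω)^2) ℙ := by
    intro n
    refine Integrable.mono (((hFn2_int n).const_mul 2).add (hFl2_int.const_mul 2))
      ((((hT_meas n).const_mul (-l)).exp.sub hFl_meas).pow_const 2).aestronglyMeasurable
      (Filter.Eventually.of_forall fun ω => ?_)
    have e1 : Real.exp (-l * T n ω) * Real.exp (-l * T n ω) = Real.exp (-(2*l) * T n ω) := by
      rw [← Real.exp_add]; congr 1; ring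
    have e2 : Real.exp (-l * W ω) * Real.exp (-l * W ω) = Real.exp (-(2*l) * W ω) := by
      rw [← Real.exp_add]; congr 1; ring
    rw [Real.norm_eq_abs, Real.norm_eq_abs, abs_of_nonneg (sq_nonneg _), abs_of_nonneg]
    · simp only [Pi.add_apply, hFl]
      nlinarith [sq_nonneg (Real.exp (-l * T n ω) + Real.exp (-l * W ω))]
    · simp only [Pi.add_apply]
      nlinarith [Real.exp_pos (-(2*l) * T n ω), Real.exp_pos (-(2*l) * W ω)]
  have hsq_le : ∀ n, ∫ ω, (Real.exp (-l * T n ω) - Fl ω)^2 ∂ℙ ≤ 4 * K := by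
    intro n
    calc ∫ ω, (Real.exp (-l * T n ω) - Fl ω)^2 ∂ℙ
        ≤ ∫ ω, (2 * Real.exp (-(2*l) * T n ω) + 2 * Real.exp (-(2*l) * W ω)) ∂ℙ := by
          refine integral_mono (hsq_int n) (((hFn2_int n).const_mul 2).add (hFl2_int.const_mul 2))
            fun ω => ?_
          have e1 : Real.exp (-l * T n ω) * Real.exp (-l * T n ω)
              = Real.exp (-(2*l) * T n ω) := by rw [← Real.exp_add]; congr 1; ring
          have e2 : Real.exp (-l * W ω) * Real.exp (-l * W ω)
              = Real.exp (-(2*l) * W ω) := by rw [← Real.exp_add]; congr 1; ring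
          simp only [hFl]
          nlinarith [sq_nonneg (Real.exp (-l * T n ω) + Real.exp (-l * W ω))]
      _ = 2 * (∫ ω, Real.exp (-(2*l) * T n ω) ∂ℙ) + 2 * (∫ ω, Real.exp (-(2*l) * W ω) ∂ℙ) := by
          rw [integral_add ((hFn2_int n).const_mul 2) (hFl2_int.const_mul 2),
            integral_const_mul, integral_const_mul]
      _ ≤ 2 * K + 2 * K := by
          have := hF2le n
          have := hFl2_le
          gcongr
      _ = 4 * K := by ring
  -- main limit: ∫ exp(-l T n) → ∫ Fl
  have htend : Filter.Tendsto (fun n => ∫ ω, Real.exp (-l * T n ω) ∂ℙ)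
      Filter.atTop (𝓝 (∫ ω, Fl ω ∂ℙ)) := by
    rw [Metric.tendsto_atTop]
    intro ε hε
    set C : ℝ := max 1 (8*K/ε) with hC
    have hCpos : (0:ℝ) < C := lt_of_lt_of_le one_pos (le_max_left _ _)
    have hCK : 4*K/C ≤ ε/2 := by
      rw [div_le_iff₀ hCpos]
      have h8 : 8*K/ε ≤ C := le_max_right _ _
      calc 4*K = ε/2 * (8*K/ε) := by field_simp; ring
        _ ≤ ε/2 * C := by gcongr
    -- min truncation tends to 0
    have hminm : ∀ n, Measurable (fun ω => min |Real.exp (-l * T n ω) - Fl ω| C) :=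
      fun n => ((((hT_meas n).const_mul (-l)).exp.sub hFl_meas).abs.min measurable_const)
    have hmin_int : ∀ n, Integrable (fun ω => min |Real.exp (-l * T n ω) - Fl ω| C) ℙ := by
      intro n
      refine Integrable.mono (integrable_const C) (hminm n).aestronglyMeasurable
        (Filter.Eventually.of_forall fun ω => ?_)
      rw [Real.norm_eq_abs, Real.norm_eq_abs, abs_of_nonneg (le_min (abs_nonneg _) hCpos.le),
        abs_of_pos hCpos]
      exact min_le_right _ _
    have hminT : Filter.Tendsto (fun n => ∫ ω, min |Real.exp (-l * T n ω) - Fl ω| C ∂ℙ)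
        Filter.atTop (𝓝 0) := by
      have h0 : (0:ℝ) = ∫ _ω, (0:ℝ) ∂(ℙ : Measure Ω) := by simp
      rw [h0]
      apply MeasureTheory.tendsto_integral_of_dominated_convergence (bound := fun _ => C)
      · exact fun n => (hminm n).aestronglyMeasurable
      · exact integrable_const C
      · intro n
        refine Filter.Eventually.of_forall fun ω => ?_
        rw [Real.norm_eq_abs, abs_of_nonneg (le_min (abs_nonneg _) hCpos.le)]
        exact min_le_right _ _
      · filter_upwards [hae] with ω hω
        have h1 : Filter.Tendsto (fun n => Real.exp (-l * T n ω)) Filter.atTop (𝓝 (Fl ω)) :=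
          (Real.continuous_exp.tendsto _).comp (hω.const_mul (-l))
        have h2 : Filter.Tendsto (fun n => |Real.exp (-l * T n ω) - Fl ω|) Filter.atTop (𝓝 0) := by
          have := (h1.sub (tendsto_const_nhds (x := Fl ω))).abs
          simpa using this
        have h3 := h2.min (tendsto_const_nhds (x := C))
        simpa [min_eq_left hCpos.le] using h3
    obtain ⟨N, hN⟩ := (Metric.tendsto_atTop.mp hminT) (ε/2) (by linarith)
    refine ⟨N, fun n hn => ?_⟩
    have hNn := hN n hn
    rw [Real.dist_eq, sub_zero] at hNn
    have hmin_nonneg : 0 ≤ ∫ ω, min |Real.exp (-l * T n ω) - Fl ω| C ∂ℙ :=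
      integral_nonneg fun ω => le_min (abs_nonneg _) hCpos.le
    have hminlt : ∫ ω, min |Real.exp (-l * T n ω) - Fl ω| C ∂ℙ < ε/2 :=
      lt_of_le_of_lt (le_abs_self _) hNn
    -- the chain of inequalities
    have hdiff_int : Integrable (fun ω => Real.exp (-l * T n ω) - Fl ω) ℙ :=
      (hFn_int n).sub hFl_int
    have habs_int : Integrable (fun ω => |Real.exp (-l * T n ω) - Fl ω|) ℙ := hdiff_int.abs
    have hrhs_int : Integrable (fun ω => min |Real.exp (-l * T n ω) - Fl ω| C
        + (Real.exp (-l * T n ω) - Fl ω)^2 / C) ℙ :=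
      (hmin_int n).add ((hsq_int n).div_const C)
    have hpt : ∀ ω, |Real.exp (-l * T n ω) - Fl ω|
        ≤ min |Real.exp (-l * T n ω) - Fl ω| C + (Real.exp (-l * T n ω) - Fl ω)^2 / C := by
      intro ω
      set d : ℝ := Real.exp (-l * T n ω) - Fl ω with hd
      have hd2 : d^2 = |d| * |d| := by rw [abs_mul_abs_self, sq]
      rcases le_total |d| C with h | h
      · rw [min_eq_left h]
        have : 0 ≤ d^2 / C := div_nonneg (sq_nonneg _) hCpos.le
        linarith
      · rw [min_eq_right h]
        have h1 : |d| ≤ d^2 / C := by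
          rw [le_div_iff₀ hCpos, hd2]
          nlinarith [abs_nonneg d]
        linarith
    have hchain : dist (∫ ω, Real.exp (-l * T n ω) ∂ℙ) (∫ ω, Fl ω ∂ℙ)
        ≤ (∫ ω, min |Real.exp (-l * T n ω) - Fl ω| C ∂ℙ) + 4*K/C := by
      rw [Real.dist_eq, ← integral_sub (hFn_int n) hFl_int]
      calc |∫ ω, (Real.exp (-l * T n ω) - Fl ω) ∂ℙ|
          ≤ ∫ ω, |Real.exp (-l * T n ω) - Fl ω| ∂ℙ := by
            simpa [Real.norm_eq_abs] using
              norm_integral_le_integral_norm (fun ω => Real.exp (-l * T n ω) - Fl ω) (μ := ℙ)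
        _ ≤ ∫ ω, (min |Real.exp (-l * T n ω) - Fl ω| C
              + (Real.exp (-l * T n ω) - Fl ω)^2 / C) ∂ℙ :=
            integral_mono habs_int hrhs_int hpt
        _ = (∫ ω, min |Real.exp (-l * T n ω) - Fl ω| C ∂ℙ)
              + (∫ ω, (Real.exp (-l * T n ω) - Fl ω)^2 ∂ℙ) / C := by
            rw [integral_add (hmin_int n) ((hsq_int n).div_const C), integral_div]
        _ ≤ (∫ ω, min |Real.exp (-l * T n ω) - Fl ω| C ∂ℙ) + 4*K/C := by
            gcongr
            exact hsq_le n
    calc dist (∫ ω, Real.exp (-l * T n ω) ∂ℙ) (∫ ω, Fl ω ∂ℙ)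
        ≤ (∫ ω, min |Real.exp (-l * T n ω) - Fl ω| C ∂ℙ) + 4*K/C := hchain
      _ < ε/2 + ε/2 := by
          have := hCK
          exact add_lt_add_of_lt_of_le hminlt hCK
      _ = ε := by ring
  -- the other limit: ∫ exp(-l T n) = exp(l^α A n) → exp (l^α/(α+1))
  have hAr : Filter.Tendsto A Filter.atTop (𝓝 (1/(α+1))) := by
    have hcm : Measurable fun x : ℝ => x ^ α := (Real.continuous_rpow_const hα0).measurable
    have h1 := riemann_tendsto (fun x => x ^ α) hcm 1
      (fun t ht => by
        rw [abs_of_nonneg (Real.rpow_nonneg ht.1 α)]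
        exact Real.rpow_le_one ht.1 ht.2 hα0)
      (fun t ht => ((Real.continuous_rpow_const hα0).continuousAt).continuousWithinAt)
    have h2 : ∫ s in (0:ℝ)..1, s ^ α = 1/(α+1) := by
      rw [integral_rpow (Or.inl (by linarith : (-1:ℝ) < α))]
      rw [Real.one_rpow, Real.zero_rpow (by linarith : α + 1 ≠ 0)]
      ring
    rw [← h2]
    exact h1.congr fun n => by rw [hA]
  have htend2 : Filter.Tendsto (fun n => ∫ ω, Real.exp (-l * T n ω) ∂ℙ)
      Filter.atTop (𝓝 (Real.exp (l ^ α / (α+1)))) := by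
    have h1 : Filter.Tendsto (fun n => Real.exp (l ^ α * A n)) Filter.atTop
        (𝓝 (Real.exp (l ^ α * (1/(α+1))))) :=
      (Real.continuous_exp.tendsto _).comp (hAr.const_mul (l ^ α))
    have h2 : l ^ α * (1/(α+1)) = l ^ α / (α+1) := by ring
    rw [h2] at h1
    exact h1.congr fun n => (hmom l hl n).symm
  exact tendsto_nhds_unique htend htend2
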